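/- Let C : [0,T] → ℝ solve the Riccati ODE dC/dt = -a - b·C - c·C² with terminal condition C(T) = 0, where a = (1-γ)/γ², c = σ_X²(ρ² + γ(1-ρ²)) > 0. If γ < 1 then a > 0 and C is strictly positive and strictly decreasing on [0,T); if γ > 1 then a < 0 and C is strictly negative and strictly increasing on [0,T). -/

import Mathlib

/-- Sign and monotonicity of the Riccati solution C with C' = -a - bC - cC², C(T) = 0:
if γ < 1 then a > 0 and C is strictly positive and strictly decreasing on [0,T);
if γ > 1 then a < 0 and C is strictly negative and strictly increasing on [0,T). -/
theorem riccati_C_sign_monotone (lam sigX ρ γ T : ℝ) (hlam : 0 < lam) (hsig : 0 < sigX)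
    (hρ : ρ ∈ Set.Icc (-1 : ℝ) 1) (hγ : 0 < γ) (hγ1 : γ ≠ 1) (hT : 0 < T)
    (C : ℝ → ℝ)
    (hC : ∀ t ∈ Set.Icc 0 T, HasDerivAt C
      (-( (1 - γ) / γ ^ 2) - (2 * (-lam + (1 - γ) / γ * ρ * sigX)) * C t
        - (sigX ^ 2 * (ρ ^ 2 + γ * (1 - ρ ^ 2))) * (C t) ^ 2) t)
    (hCT : C T = 0) :
    (γ < 1 → (0 < (1 - γ) / γ ^ 2 ∧ (∀ t ∈ Set.Ico 0 T, 0 < C t) ∧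
      StrictAntiOn C (Set.Ico 0 T))) ∧
    (1 < γ → ((1 - γ) / γ ^ 2 < 0 ∧ (∀ t ∈ Set.Ico 0 T, C t < 0) ∧
      StrictMonoOn C (Set.Ico 0 T))) := by
  set a := (1 - γ) / γ ^ 2 with ha
  set b := 2 * (-lam + (1 - γ) / γ * ρ * sigX) with hb
  set c := sigX ^ 2 * (ρ ^ 2 + γ * (1 - ρ ^ 2)) with hc
  set D : ℝ → ℝ := fun t => -a - b * C t - c * C t ^ 2 with hDdef
  have hγ2 : (0:ℝ) < γ ^ 2 := by positivity
  have hane : a ≠ 0 := by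
    rw [ha]
    rcases hγ1.lt_or_gt with h | h
    · exact ne_of_gt (by apply div_pos <;> nlinarith)
    · exact ne_of_lt (div_neg_of_neg_of_pos (by linarith) hγ2)
  have hCD : ∀ t ∈ Set.Icc 0 T, HasDerivAt C (D t) t := hC
  have hDd : ∀ t ∈ Set.Icc (0:ℝ) T, HasDerivAt D ((-b - 2 * c * C t) * D t) t := by
    intro t ht
    have h := ((hasDerivAt_const t (-a)).sub ((hCD t ht).const_mul b)).sub
      (((hCD t ht).pow 2).const_mul c)
    refine h.congr_deriv ?_
    push_cast
    ring
  have hcontC : ContinuousOn C (Set.Icc 0 T) :=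
    fun t ht => ((hCD t ht).continuousAt).continuousWithinAt
  have hcontD : ContinuousOn D (Set.Icc 0 T) :=
    fun t ht => ((hDd t ht).continuousAt).continuousWithinAt
  have hDT : D T = -a := by simp [hDdef, hCT]
  -- D never vanishes on [0,T]
  obtain ⟨K, hK⟩ := (isCompact_Icc (a := (0:ℝ)) (b := T)).exists_bound_of_continuousOn
    (by fun_prop : ContinuousOn (fun t => -b - 2 * c * C t) (Set.Icc 0 T))
  have hne : ∀ s ∈ Set.Icc (0:ℝ) T, D s ≠ 0 := by
    intro s hs hDs
    have hsub : Set.Icc s T ⊆ Set.Icc 0 T := Set.Icc_subset_Icc hs.1 le_rfl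
    have hg := norm_le_gronwallBound_of_norm_deriv_right_le (δ := 0) (K := K) (ε := 0)
      (hcontD.mono hsub)
      (fun t ht => (hDd t (hsub (Set.Ico_subset_Icc_self ht))).hasDerivWithinAt)
      (by simp [hDs])
      (fun t ht => by
        have h1 := hK t (hsub (Set.Ico_subset_Icc_self ht))
        have h2 : ‖(-b - 2 * c * C t) * D t‖ = ‖-b - 2 * c * C t‖ * ‖D t‖ := norm_mul _ _
        have h3 : (0:ℝ) ≤ ‖D t‖ := norm_nonneg _
        rw [h2]
        nlinarith [mul_le_mul_of_nonneg_right h1 h3])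
    have hT' := hg T (Set.right_mem_Icc.2 hs.2)
    rw [gronwallBound_ε0_δ0] at hT'
    have : D T = 0 := by
      have := norm_nonneg (D T)
      have : ‖D T‖ = 0 := le_antisymm hT' this
      simpa using this
    rw [hDT] at this
    exact hane (by linarith [neg_eq_zero.mp this])
  -- main case analysis
  constructor
  · intro hγlt
    have hapos : 0 < a := by rw [ha]; apply div_pos <;> nlinarith
    have hDneg : ∀ t ∈ Set.Icc (0:ℝ) T, D t < 0 := by
      intro t ht
      by_contra h
      push_neg at h
      have hpos : 0 < D t := lt_of_le_of_ne h (Ne.symm (hne t ht))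
      have hIVT := intermediate_value_Icc' ht.2 (hcontD.mono (Set.Icc_subset_Icc ht.1 le_rfl))
      have h0 : (0:ℝ) ∈ Set.Icc (D T) (D t) := ⟨by rw [hDT]; linarith, le_of_lt hpos⟩
      obtain ⟨x, hx, hx0⟩ := hIVT h0
      exact hne x (Set.Icc_subset_Icc ht.1 le_rfl hx) hx0
    have hanti : StrictAntiOn C (Set.Icc 0 T) := by
      apply strictAntiOn_of_deriv_neg (convex_Icc 0 T) hcontC
      intro x hx
      rw [interior_Icc] at hx
      have hx' : x ∈ Set.Icc (0:ℝ) T := ⟨le_of_lt hx.1, le_of_lt hx.2⟩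
      rw [(hCD x hx').deriv]
      exact hDneg x hx'
    refine ⟨hapos, ?_, hanti.mono Set.Ico_subset_Icc_self⟩
    intro t ht
    have := hanti (Set.Ico_subset_Icc_self ht) (Set.right_mem_Icc.2 (le_of_lt hT)) ht.2
    rwa [hCT] at this
  · intro hγgt
    have haneg : a < 0 := div_neg_of_neg_of_pos (by linarith) hγ2
    have hDpos : ∀ t ∈ Set.Icc (0:ℝ) T, 0 < D t := by
      intro t ht
      by_contra h
      push_neg at h
      have hneg : D t < 0 := lt_of_le_of_ne h (hne t ht)
      have hIVT := intermediate_value_Icc ht.2 (hcontD.mono (Set.Icc_subset_Icc ht.1 le_rfl))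
      have h0 : (0:ℝ) ∈ Set.Icc (D t) (D T) := ⟨le_of_lt hneg, by rw [hDT]; linarith⟩
      obtain ⟨x, hx, hx0⟩ := hIVT h0
      exact hne x (Set.Icc_subset_Icc ht.1 le_rfl hx) hx0
    have hmono : StrictMonoOn C (Set.Icc 0 T) := by
      apply strictMonoOn_of_deriv_pos (convex_Icc 0 T) hcontC
      intro x hx
      rw [interior_Icc] at hx
      have hx' : x ∈ Set.Icc (0:ℝ) T := ⟨le_of_lt hx.1, le_of_lt hx.2⟩
      rw [(hCD x hx').deriv]
      exact hDpos x hx'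
    refine ⟨haneg, ?_, hmono.mono Set.Ico_subset_Icc_self⟩
    intro t ht
    have := hmono (Set.Ico_subset_Icc_self ht) (Set.right_mem_Icc.2 (le_of_lt hT)) ht.2
    rwa [hCT] at this
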